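/- Let (k_j)_{j≥1} be a sequence of even natural numbers with k_1 ≥ 6 and k_{j+1} - k_j ≥ 6 for all j. Define a_0 = a_1 = 1, a_k = 2 if k = k_j or k = k_j + 2 for some j, and a_k = 4 otherwise. Then the denominators t_k of the convergents of [a_0,a_1,a_2,...] satisfy t_k ≡ 3 (mod 4) if k = k_j for some j, and t_k ≡ 1 (mod 4) otherwise. -/
import Mathlib


/-- Numerators of continued fraction convergents: `cfS a k = s_k`
(with `s_{-1} = 1`, `s_0 = a_0`, `s_k = a_k s_{k-1} + s_{k-2}`). -/
def cfS (a : ℕ → ℤ) : ℕ → ℤ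
  | 0 => a 0
  | 1 => a 1 * a 0 + 1
  | (k+2) => a (k+2) * cfS a (k+1) + cfS a k

/-- Denominators of continued fraction convergents: `cfT a k = t_k`
(with `t_{-1} = 0`, `t_0 = 1`, `t_k = a_k t_{k-1} + t_{k-2}`). -/
def cfT (a : ℕ → ℤ) : ℕ → ℤ
  | 0 => 1
  | 1 => a 1
  | (k+2) => a (k+2) * cfT a (k+1) + cfT a k

theorem denominators_mod_four_construction_two
    (kseq : ℕ → ℕ) (heven : ∀ j, 1 ≤ j → Even (kseq j)) (h1 : 6 ≤ kseq 1)
    (hgap : ∀ j, 1 ≤ j → kseq j + 6 ≤ kseq (j+1))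
    (a : ℕ → ℤ) (ha0 : a 0 = 1) (ha1 : a 1 = 1)
    (ha2 : ∀ n, 2 ≤ n → (∃ j, 1 ≤ j ∧ (n = kseq j ∨ n = kseq j + 2)) → a n = 2)
    (ha4 : ∀ n, 2 ≤ n → ¬(∃ j, 1 ≤ j ∧ (n = kseq j ∨ n = kseq j + 2)) → a n = 4) :
    ∀ n, ((∃ j, 1 ≤ j ∧ n = kseq j) → cfT a n ≡ 3 [ZMOD 4]) ∧
      (¬(∃ j, 1 ≤ j ∧ n = kseq j) → cfT a n ≡ 1 [ZMOD 4]) := by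
  -- monotonicity with gap 6
  have key : ∀ i, 1 ≤ i → ∀ j, i < j → kseq i + 6 ≤ kseq j := by
    intro i hi j hj
    induction j with
    | zero => omega
    | succ k ihk =>
      rcases Nat.lt_succ_iff_lt_or_eq.mp hj with h | h
      · have h2 := hgap k (by omega)
        have h3 := ihk h
        omega
      · subst h; exact hgap i hi
  -- separation: distinct indices give values at least 6 apart
  have hsep : ∀ i j, 1 ≤ i → 1 ≤ j → i ≠ j →
      kseq i + 6 ≤ kseq j ∨ kseq j + 6 ≤ kseq i := by
    intro i j hi hj hij
    rcases Nat.lt_or_ge i j with h | h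
    · exact Or.inl (key i hi j h)
    · exact Or.inr (key j hj i (by omega))
  have hge : ∀ j, 1 ≤ j → 6 ≤ kseq j := by
    intro j hj
    rcases Nat.eq_or_lt_of_le hj with h | h
    · rw [← h]; exact h1
    · have := key 1 le_rfl j h; omega
  -- all denominators are odd
  have hodd : ∀ n, cfT a n % 2 = 1 := by
    intro n
    induction n using Nat.strong_induction_on with
    | _ n ih =>
      match n with
      | 0 => show (1 : ℤ) % 2 = 1; norm_num
      | 1 => show a 1 % 2 = 1; rw [ha1]; norm_num
      | (m+2) =>
        have h2 : a (m+2) = 2 ∨ a (m+2) = 4 := by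
          by_cases h : ∃ j, 1 ≤ j ∧ (m+2 = kseq j ∨ m+2 = kseq j + 2)
          · exact Or.inl (ha2 _ (by omega) h)
          · exact Or.inr (ha4 _ (by omega) h)
        have hm := ih m (by omega)
        show (a (m+2) * cfT a (m+1) + cfT a m) % 2 = 1
        rcases h2 with h | h <;> rw [h] <;> omega
  intro n
  induction n using Nat.strong_induction_on with
  | _ n ih =>
    match n with
    | 0 =>
      constructor
      · rintro ⟨j, hj, hjeq⟩
        have := hge j hj; omega
      · intro _
        show (1 : ℤ) % 4 = 1 % 4; norm_num
    | 1 =>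
      constructor
      · rintro ⟨j, hj, hjeq⟩
        have := hge j hj; omega
      · intro _
        show a 1 % 4 = 1 % 4; rw [ha1]
    | (m+2) =>
      have ihm := ih m (by omega)
      have hodd1 := hodd (m+1)
      by_cases hA : ∃ j, 1 ≤ j ∧ m + 2 = kseq j
      · -- n = kseq j : a n = 2, and m is not a kseq value nor kseq + 2
        obtain ⟨j, hj, hjeq⟩ := hA
        have ha : a (m+2) = 2 := ha2 _ (by omega) ⟨j, hj, Or.inl hjeq⟩
        have hmnot : ¬ ∃ j', 1 ≤ j' ∧ m = kseq j' := by
          rintro ⟨j', hj', hj'eq⟩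
          by_cases hjj : j = j'
          · subst hjj; omega
          · rcases hsep j j' hj hj' hjj with h | h <;> omega
        have hprev : cfT a m % 4 = 1 % 4 := ihm.2 hmnot
        have hres : cfT a (m+2) % 4 = 3 % 4 := by
          show (a (m+2) * cfT a (m+1) + cfT a m) % 4 = 3 % 4
          rw [ha]; omega
        exact ⟨fun _ => hres, fun h => absurd ⟨j, hj, hjeq⟩ h⟩
      · by_cases hB : ∃ j, 1 ≤ j ∧ m + 2 = kseq j + 2
        · -- n = kseq j + 2 : a n = 2, m = kseq j
          obtain ⟨j, hj, hjeq⟩ := hB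
          have ha : a (m+2) = 2 := ha2 _ (by omega) ⟨j, hj, Or.inr hjeq⟩
          have hprev : cfT a m % 4 = 3 % 4 := ihm.1 ⟨j, hj, by omega⟩
          have hres : cfT a (m+2) % 4 = 1 % 4 := by
            show (a (m+2) * cfT a (m+1) + cfT a m) % 4 = 1 % 4
            rw [ha]; omega
          exact ⟨fun h => absurd h hA, fun _ => hres⟩
        · -- a n = 4, m is not a kseq value
          have ha : a (m+2) = 4 := by
            apply ha4 _ (by omega)
            rintro ⟨j, hj, hc | hc⟩
            · exact hA ⟨j, hj, hc⟩
            · exact hB ⟨j, hj, hc⟩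
          have hmnot : ¬ ∃ j', 1 ≤ j' ∧ m = kseq j' := by
            rintro ⟨j', hj', hj'eq⟩
            exact hB ⟨j', hj', by omega⟩
          have hprev : cfT a m % 4 = 1 % 4 := ihm.2 hmnot
          have hres : cfT a (m+2) % 4 = 1 % 4 := by
            show (a (m+2) * cfT a (m+1) + cfT a m) % 4 = 1 % 4
            rw [ha]; omega
          exact ⟨fun h => absurd h hA, fun _ => hres⟩
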